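/- Let k be an odd positive integer, let Λ be a positive-definite even unimodular lattice of rank 24 without roots, let S = (x_1, …, x_24) be a 2k-frame of Λ, and let C_2 ⊆ 𝔽_2^24 be the binary code C_2 = {(d_1 mod 2, …, d_24 mod 2) : d ∈ ℤ^24 and (1/2)·Σ_i d_i x_i ∈ Λ}. Then C_2 is a Type II binary code: C_2 is self-dual with respect to the standard bilinear form on 𝔽_2^24, and the Hamming weight of every codeword of C_2 is divisible by 4. -/

import Mathlib

open scoped BigOperators

/-- Let `k` be an odd positive integer, `Λ` a positive-definite even unimodular lattice of
rank 24 without roots, and `x₁, …, x₂₄` a `2k`-frame of `Λ`.  Then the binary code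
`C₂ = {(d₁ mod 2, …, d₂₄ mod 2) : d ∈ ℤ²⁴, (1/2)·∑ᵢ dᵢ xᵢ ∈ Λ}` is a Type II binary code:
it is self-dual and the Hamming weight of each of its codewords is divisible by 4. -/
theorem frame_binary_code_typeII (k : ℕ) (hk : 0 < k) (hodd : Odd k)
    (Λ : Type) [AddCommGroup Λ] [Module ℤ Λ]
    (hfree : Module.Free ℤ Λ) (hrank : Module.finrank ℤ Λ = 24)
    (B : Λ →ₗ[ℤ] Λ →ₗ[ℤ] ℤ)
    (hsymm : ∀ a b : Λ, B a b = B b a)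
    (hpos : ∀ a : Λ, a ≠ 0 → 0 < B a a)
    (heven : ∀ a : Λ, Even (B a a))
    (hunimod : Function.Bijective fun a : Λ => B a)
    (hnoroots : ∀ a : Λ, B a a ≠ 2)
    (x : Fin 24 → Λ)
    (hframe : ∀ i j, B (x i) (x j) = if i = j then (2 * (k : ℤ)) else 0)
    (C2 : Submodule (ZMod 2) (Fin 24 → ZMod 2))
    (hC2 : (C2 : Set (Fin 24 → ZMod 2)) =
      {a | ∃ d : Fin 24 → ℤ, (∀ i, ((d i : ZMod 2)) = a i) ∧
            ∃ l : Λ, (2 : ℤ) • l = ∑ i, d i • x i}) :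
    -- `C₂` is self-dual
    (C2 : Set (Fin 24 → ZMod 2)) = {y | ∀ c ∈ C2, ∑ i, y i * c i = 0} ∧
    -- the Hamming weight of every codeword of `C₂` is divisible by 4
    (∀ c ∈ C2, 4 ∣ (Finset.univ.filter fun i => c i ≠ 0).card) := by
  have hkodd : Odd (k : ℤ) := (Int.odd_coe_nat k).mpr hodd
  haveI : Module.Finite ℤ Λ :=
    Module.finite_of_finrank_pos (by rw [hrank]; norm_num)
  -- bilinearity helpers
  have happ1 : ∀ (c : ℤ) (a b : Λ), B (c • a) b = c * B a b := fun c a b => by simp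
  have happ2 : ∀ (c : ℤ) (a b : Λ), B a (c • b) = c * B a b := fun c a b => by simp
  have hsumL : ∀ {n : ℕ} (f : Fin n → Λ) (b : Λ),
      B (∑ i, f i) b = ∑ i, B (f i) b := fun f b => by
    rw [map_sum, LinearMap.sum_apply]
  have hsumR : ∀ {n : ℕ} (a : Λ) (f : Fin n → Λ),
      B a (∑ i, f i) = ∑ i, B a (f i) := fun a f => map_sum (B a) _ _
  -- A vector orthogonal to all the frame vectors vanishes.
  have horth : ∀ v : Λ, (∀ i, B v (x i) = 0) → v = 0 := by
    intro v hv
    by_contra hv0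
    set z : Option (Fin 24) → Λ := fun o => o.elim v x with hz
    have hzz : ∀ o o' : Option (Fin 24), o ≠ o' → B (z o) (z o') = 0 := by
      intro o o' hoo'
      rcases o with _ | i <;> rcases o' with _ | j
      · exact absurd rfl hoo'
      · exact hv j
      · rw [show z (some i) = x i from rfl, show z none = v from rfl,
          hsymm (x i) v]; exact hv i
      · have hij : i ≠ j := fun h => hoo' (by rw [h])
        show B (x i) (x j) = 0
        rw [hframe, if_neg hij]
    have hli : LinearIndependent ℤ z := by
      rw [Fintype.linearIndependent_iff]
      intro g hg j
      have key : B (∑ o', g o' • z o') (z j) = g j * B (z j) (z j) := by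
        rw [map_sum, LinearMap.sum_apply]
        rw [Finset.sum_eq_single j
          (fun o' _ ho' => by rw [happ1, hzz o' j ho', mul_zero])
          (fun h => absurd (Finset.mem_univ j) h)]
        exact happ1 _ _ _
      have hB0 : B (∑ o', g o' • z o') (z j) = 0 := by
        have h := congrArg (fun w : Λ => B w (z j)) hg
        simpa using h
      have h0 : g j * B (z j) (z j) = 0 := by
        rw [← key]; exact hB0
      have hdiag : B (z j) (z j) ≠ 0 := by
        rcases j with _ | i
        · exact ne_of_gt (hpos v hv0)
        · show B (x i) (x i) ≠ 0
          rw [hframe, if_pos rfl]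
          omega
      exact (mul_eq_zero.mp h0).resolve_right hdiag
    have hcard := hli.fintype_card_le_finrank
    rw [hrank] at hcard
    simp at hcard
  -- Expansion: ∑ B(l, xᵢ) • xᵢ = 2k • l.
  have hexpand : ∀ l : Λ, ∑ i, B l (x i) • x i = (2 * (k : ℤ)) • l := by
    intro l
    have h0 : ∀ j, B ((∑ i, B l (x i) • x i) - (2 * (k : ℤ)) • l) (x j) = 0 := by
      intro j
      rw [map_sub, LinearMap.sub_apply, hsumL, happ1]
      have hterm : ∀ i, B (B l (x i) • x i) (x j)
          = if i = j then B l (x j) * (2 * (k:ℤ)) else 0 := by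
        intro i
        rw [happ1, hframe]
        by_cases h : i = j
        · subst h; simp
        · simp [h]
      rw [Finset.sum_congr rfl fun i _ => hterm i,
        Finset.sum_ite_eq' Finset.univ j (fun _ => B l (x j) * (2 * (k:ℤ)))]
      rw [if_pos (Finset.mem_univ j), hsymm l (x j)]
      ring
    have h := horth _ h0
    rw [sub_eq_zero] at h
    exact h.symm ▸ h
  -- Every (B l xᵢ mod 2) is a codeword.
  have hmem : ∀ l : Λ, (fun i => ((B l (x i) : ZMod 2))) ∈ C2 := by
    intro l
    have h : (fun i => ((B l (x i) : ZMod 2))) ∈ (C2 : Set (Fin 24 → ZMod 2)) := by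
      rw [hC2]
      refine ⟨fun i => B l (x i), fun i => rfl, (k : ℤ) • l, ?_⟩
      show (2 : ℤ) • ((k : ℤ) • l) = ∑ i, B l (x i) • x i
      rw [hexpand l]
      rw [← int_smul_eq_zsmul ‹Module ℤ Λ› 2, ← int_smul_eq_zsmul ‹Module ℤ Λ› (k : ℤ),
        ← int_smul_eq_zsmul ‹Module ℤ Λ› (2 * (k : ℤ))]
      exact @smul_smul ℤ Λ _ (‹Module ℤ Λ›.toMulAction) 2 (k : ℤ) l
    exact h
  -- Inner product of two frame expansions.
  have hpair : ∀ (d e : Fin 24 → ℤ),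
      B (∑ i, d i • x i) (∑ i, e i • x i) = 2 * (k:ℤ) * ∑ i, d i * e i := by
    intro d e
    rw [hsumL]
    have h1 : ∀ i, B (d i • x i) (∑ j, e j • x j) = 2 * (k:ℤ) * (d i * e i) := by
      intro i
      rw [happ1, hsumR]
      have h2 : ∀ j, B (x i) (e j • x j) = if j = i then 2 * (k:ℤ) * e i else 0 := by
        intro j
        rw [happ2, hframe]
        by_cases h : j = i
        · subst h; simp; ring
        · rw [if_neg (fun hh : i = j => h hh.symm), if_neg h, mul_zero]
      rw [Finset.sum_congr rfl fun j _ => h2 j,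
        Finset.sum_ite_eq' Finset.univ i (fun _ => 2 * (k:ℤ) * e i),
        if_pos (Finset.mem_univ i)]
      ring
    rw [Finset.sum_congr rfl fun i _ => h1 i, ← Finset.mul_sum]
  -- Self-orthogonality.
  have hdot : ∀ c ∈ C2, ∀ c' ∈ C2, ∑ i, c i * c' i = 0 := by
    intro c hc c' hc'
    have hc1 : c ∈ (C2 : Set (Fin 24 → ZMod 2)) := hc
    have hc2 : c' ∈ (C2 : Set (Fin 24 → ZMod 2)) := hc'
    rw [hC2] at hc1 hc2
    obtain ⟨d, hd, lam, hlam⟩ := hc1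
    obtain ⟨e, he, mu, hmu⟩ := hc2
    have hbil : 2 * (k:ℤ) * ∑ i, d i * e i = 4 * B lam mu := by
      rw [← hpair d e, ← hlam, ← hmu, happ1, happ2]
      ring
    have h2 : (2:ℤ) ∣ ∑ i, d i * e i := by
      rcases Int.even_or_odd (∑ i, d i * e i) with h | h
      · exact h.two_dvd
      · exfalso
        have hoddm : Odd ((k:ℤ) * ∑ i, d i * e i) := hkodd.mul h
        have heq : (k:ℤ) * ∑ i, d i * e i = 2 * B lam mu := by linarith
        rw [heq] at hoddm
        exact (Int.not_odd_iff_even.mpr (even_two_mul _)) hoddm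
    have hz : ((∑ i, d i * e i : ℤ) : ZMod 2) = 0 :=
      (ZMod.intCast_zmod_eq_zero_iff_dvd _ 2).mpr h2
    rw [← hz]
    push_cast
    exact Finset.sum_congr rfl fun i _ => by rw [hd i, he i]
  refine ⟨?_, ?_⟩
  · -- self-duality
    apply Set.Subset.antisymm
    · intro c hc c' hc'
      exact hdot c hc c' hc'
    · intro y hy
      simp only [Set.mem_setOf_eq] at hy
      set e : Fin 24 → ℤ := fun i => ((y i).val : ℤ) with hedef
      have he : ∀ i, ((e i : ZMod 2)) = y i := by
        intro i
        simp [hedef, ZMod.natCast_val, ZMod.cast_id]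
      have hdvd : ∀ l : Λ, (2:ℤ) ∣ ∑ i, e i * B (x i) l := by
        intro l
        have hc := hy _ (hmem l)
        have hz : ((∑ i, e i * B (x i) l : ℤ) : ZMod 2) = 0 := by
          push_cast
          rw [← hc]
          exact Finset.sum_congr rfl fun i _ => by
            rw [he i, hsymm (x i) l]
        exact (ZMod.intCast_zmod_eq_zero_iff_dvd _ 2).mp hz
      set g : Λ →ₗ[ℤ] ℤ := ∑ i, e i • B (x i) with hgdef
      have hgapp : ∀ l, g l = ∑ i, e i * B (x i) l := by
        intro l
        rw [hgdef, LinearMap.sum_apply]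
        exact Finset.sum_congr rfl fun i _ => by
          rw [LinearMap.smul_apply, smul_eq_mul]
      have hgdvd : ∀ l, (2:ℤ) ∣ g l := fun l => by rw [hgapp]; exact hdvd l
      set f : Λ →ₗ[ℤ] ℤ :=
        { toFun := fun l => g l / 2
          map_add' := by
            intro a b
            change g _ / 2 = g a / 2 + g b / 2
            rw [map_add g a b]
            obtain ⟨m, hm⟩ := hgdvd a
            obtain ⟨n, hn⟩ := hgdvd b
            rw [hm, hn, ← mul_add,
              Int.mul_ediv_cancel_left _ (by norm_num : (2:ℤ) ≠ 0),
              Int.mul_ediv_cancel_left _ (by norm_num : (2:ℤ) ≠ 0),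
              Int.mul_ediv_cancel_left _ (by norm_num : (2:ℤ) ≠ 0)]
          map_smul' := by
            intro n a
            obtain ⟨m, hm⟩ := hgdvd a
            change g _ / 2 = n * (g a / 2)
            rw [g.map_smul, smul_eq_mul, hm, ← mul_assoc, mul_comm n 2, mul_assoc,
              Int.mul_ediv_cancel_left _ (by norm_num : (2:ℤ) ≠ 0),
              Int.mul_ediv_cancel_left _ (by norm_num : (2:ℤ) ≠ 0)] } with hfdef
      obtain ⟨mu, hmu⟩ := hunimod.2 f
      have hBmu : B mu = f := hmu
      have hkey : (fun a : Λ => B a) ((2:ℤ) • mu)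
          = (fun a : Λ => B a) (∑ i, e i • x i) := by
        simp only
        ext l
        rw [happ1, hBmu]
        have h2f : (2:ℤ) * f l = g l := by
          show (2:ℤ) * (g l / 2) = g l
          exact Int.mul_ediv_cancel' (hgdvd l)
        rw [h2f, hgapp, hsumL]
        exact Finset.sum_congr rfl fun i _ => (happ1 (e i) (x i) l).symm
      have h2mu := hunimod.1 hkey
      show y ∈ (C2 : Set (Fin 24 → ZMod 2))
      rw [hC2]
      exact ⟨e, he, mu, h2mu⟩
  · -- weight divisibility
    intro c hc
    have hc1 : c ∈ (C2 : Set (Fin 24 → ZMod 2)) := hc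
    rw [hC2] at hc1
    obtain ⟨d, hd, lam, hlam⟩ := hc1
    have hbil : 2 * (k:ℤ) * ∑ i, d i * d i = 4 * B lam lam := by
      rw [← hpair d d, ← hlam, happ1, happ2]
      ring
    obtain ⟨m, hm⟩ := heven lam
    have hks : (k:ℤ) * ∑ i, d i * d i = 4 * m := by
      rw [hm] at hbil; linarith
    have hodd2 : ∀ s : ℤ, (2:ℤ) ∣ (k:ℤ) * s → (2:ℤ) ∣ s := by
      intro s hs
      rcases Int.even_mul.mp (even_iff_two_dvd.mpr hs) with h | h
      · exact absurd h (Int.not_even_iff_odd.mpr hkodd)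
      · exact h.two_dvd
    have h4 : (4:ℤ) ∣ ∑ i, d i * d i := by
      have h1 : (2:ℤ) ∣ ∑ i, d i * d i :=
        hodd2 _ ⟨2 * m, by rw [hks]; ring⟩
      obtain ⟨s', hs'⟩ := h1
      have h2 : (2:ℤ) ∣ s' := by
        apply hodd2
        have hh : (2:ℤ) * ((k:ℤ) * s') = 2 * (2 * m) := by
          rw [show (2:ℤ) * ((k:ℤ) * s') = (k:ℤ) * (2 * s') by ring, ← hs', hks]; ring
        exact ⟨m, mul_left_cancel₀ (by norm_num : (2:ℤ) ≠ 0) hh⟩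
      obtain ⟨s'', hs''⟩ := h2
      exact ⟨s'', by rw [hs', hs'']; ring⟩
    have hterm : ∀ i : Fin 24, (4:ℤ) ∣ d i * d i - (if c i ≠ 0 then 1 else 0) := by
      intro i
      have hci : c i = 0 ↔ (2:ℤ) ∣ d i := by
        rw [← hd i]
        exact ZMod.intCast_zmod_eq_zero_iff_dvd (d i) 2
      rcases Int.even_or_odd (d i) with ⟨t, ht⟩ | ⟨t, ht⟩
      · have hc0 : c i = 0 := hci.mpr ⟨t, by rw [ht]; ring⟩
        simp only [hc0, ne_eq, not_true_eq_false, if_false, sub_zero, ht]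
        exact ⟨t * t, by ring⟩
      · have hc0 : ¬ (c i = 0) := by
          rw [hci]; intro hdvd
          rw [ht] at hdvd; omega
        simp only [hc0, ne_eq, not_false_eq_true, if_true, ht]
        exact ⟨t * t + t, by ring⟩
    have hsumdvd : (4:ℤ) ∣ ∑ i, (d i * d i - (if c i ≠ 0 then 1 else 0)) :=
      Finset.dvd_sum fun i _ => hterm i
    rw [Finset.sum_sub_distrib] at hsumdvd
    have h4w : (4:ℤ) ∣ ∑ i, (if c i ≠ 0 then (1:ℤ) else 0) := by
      have := dvd_sub h4 hsumdvd
      simpa using this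
    have hcount : ∑ i, (if c i ≠ 0 then (1:ℤ) else 0)
        = ((Finset.univ.filter fun i => c i ≠ 0).card : ℤ) := by
      rw [Finset.sum_boole]
    rw [hcount] at h4w
    exact_mod_cast h4w
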